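/- (One-dimensional extension of Jensen's inequality, Lemma 3 in the form used.) Let g : ℝ → ℝ be convex on ℝ. Let J be a finite set, ν : J → ℝ with ν_j ≥ 0 for all j and Σ_{j∈J} ν_j = 1, and y : J → ℤ. Set x = Σ_{j∈J} ν_j (y_j : ℝ) and m = ⌊x⌋. Then g(x) ≤ ((m+1) − x) · g(m) + (x − m) · g(m+1) ≤ Σ_{j∈J} ν_j g(y_j). That is, among all representations of x as a convex combination of integers, the combination using the two adjacent integers ⌊x⌋ and ⌊x⌋+1 gives the smallest value of the corresponding convex combination of g-values. -/

import Mathlib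

open Finset

lemma secant_le {g : ℝ → ℝ} (hg : ConvexOn ℝ Set.univ g) (m t : ℝ)
    (ht : t ≤ m ∨ m + 1 ≤ t) :
    (m + 1 - t) * g m + (t - m) * g (m + 1) ≤ g t := by
  rcases ht with ht | ht
  · have hpos : 0 < m + 1 - t := by linarith
    have h := hg.2 (Set.mem_univ t) (Set.mem_univ (m + 1))
      (show (0:ℝ) ≤ 1 / (m + 1 - t) by positivity)
      (show (0:ℝ) ≤ (m - t) / (m + 1 - t) from div_nonneg (by linarith) hpos.le)
      (show 1 / (m + 1 - t) + (m - t) / (m + 1 - t) = 1 by field_simp; ring)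
    have hcomb : (1 / (m + 1 - t)) • t + ((m - t) / (m + 1 - t)) • (m + 1) = m := by
      simp only [smul_eq_mul]
      rw [div_mul_eq_mul_div, div_mul_eq_mul_div, ← add_div, div_eq_iff hpos.ne']
      ring
    rw [hcomb] at h
    rw [smul_eq_mul, smul_eq_mul] at h
    have h2 : (m + 1 - t) * g m ≤ g t + (m - t) * g (m + 1) := by
      have := mul_le_mul_of_nonneg_left h (le_of_lt hpos)
      calc (m + 1 - t) * g m ≤ (m + 1 - t) * (1 / (m + 1 - t) * g t + (m - t) / (m + 1 - t) * g (m + 1)) := this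
        _ = g t + (m - t) * g (m + 1) := by field_simp
    linarith
  · have hpos : 0 < t - m := by linarith
    have h := hg.2 (Set.mem_univ m) (Set.mem_univ t)
      (show (0:ℝ) ≤ (t - (m + 1)) / (t - m) from div_nonneg (by linarith) hpos.le)
      (show (0:ℝ) ≤ 1 / (t - m) by positivity)
      (show (t - (m + 1)) / (t - m) + 1 / (t - m) = 1 by field_simp; ring)
    have hcomb : ((t - (m + 1)) / (t - m)) • m + (1 / (t - m)) • t = m + 1 := by
      simp only [smul_eq_mul]
      rw [div_mul_eq_mul_div, div_mul_eq_mul_div, ← add_div, div_eq_iff hpos.ne']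
      ring
    rw [hcomb] at h
    rw [smul_eq_mul, smul_eq_mul] at h
    have h2 : (t - m) * g (m + 1) ≤ (t - (m + 1)) * g m + g t := by
      have := mul_le_mul_of_nonneg_left h (le_of_lt hpos)
      calc (t - m) * g (m + 1) ≤ (t - m) * ((t - (m + 1)) / (t - m) * g m + 1 / (t - m) * g t) := this
        _ = (t - (m + 1)) * g m + g t := by field_simp
    linarith

/-- Lemma 3: one-dimensional extension of Jensen's inequality. Among all
representations of `x` as a convex combination of integers, the combination using the
adjacent integers `⌊x⌋` and `⌊x⌋ + 1` minimizes the corresponding combination of values. -/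
theorem jensen_extension_one_dim {ι : Type*} (g : ℝ → ℝ) (hg : ConvexOn ℝ Set.univ g)
    (J : Finset ι) (ν : ι → ℝ) (hν0 : ∀ j ∈ J, 0 ≤ ν j) (hν1 : ∑ j ∈ J, ν j = 1)
    (y : ι → ℤ) (x : ℝ) (hx : x = ∑ j ∈ J, ν j * (y j : ℝ)) (m : ℤ) (hm : m = ⌊x⌋) :
    g x ≤ ((m + 1 : ℝ) - x) * g (m : ℝ) + (x - (m : ℝ)) * g ((m : ℝ) + 1) ∧
    ((m + 1 : ℝ) - x) * g (m : ℝ) + (x - (m : ℝ)) * g ((m : ℝ) + 1) ≤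
      ∑ j ∈ J, ν j * g (y j : ℝ) := by
  have hml : (m : ℝ) ≤ x := by rw [hm]; exact Int.floor_le x
  have hmu : x < (m : ℝ) + 1 := by rw [hm]; exact_mod_cast Int.lt_floor_add_one x
  constructor
  · have h := hg.2 (Set.mem_univ (m : ℝ)) (Set.mem_univ ((m : ℝ) + 1))
      (show (0:ℝ) ≤ (m + 1 : ℝ) - x by linarith)
      (show (0:ℝ) ≤ x - (m : ℝ) by linarith)
      (show ((m + 1 : ℝ) - x) + (x - (m : ℝ)) = 1 by ring)
    have hc : ((m + 1 : ℝ) - x) • (m : ℝ) + (x - (m : ℝ)) • ((m : ℝ) + 1) = x := by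
      simp [smul_eq_mul]; ring
    rw [hc, smul_eq_mul, smul_eq_mul] at h
    exact h
  · have key : ∀ j ∈ J, ν j * (((m : ℝ) + 1 - (y j : ℝ)) * g (m : ℝ)
        + ((y j : ℝ) - (m : ℝ)) * g ((m : ℝ) + 1)) ≤ ν j * g (y j : ℝ) := by
      intro j hj
      apply mul_le_mul_of_nonneg_left _ (hν0 j hj)
      apply secant_le hg
      rcases le_or_gt (y j) m with h | h
      · left; exact_mod_cast h
      · right; exact_mod_cast h
    have hsum := Finset.sum_le_sum key
    have heq : ∑ j ∈ J, ν j * (((m : ℝ) + 1 - (y j : ℝ)) * g (m : ℝ)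
        + ((y j : ℝ) - (m : ℝ)) * g ((m : ℝ) + 1))
        = ((m + 1 : ℝ) - x) * g (m : ℝ) + (x - (m : ℝ)) * g ((m : ℝ) + 1) := by
      have : ∀ j ∈ J, ν j * (((m : ℝ) + 1 - (y j : ℝ)) * g (m : ℝ)
          + ((y j : ℝ) - (m : ℝ)) * g ((m : ℝ) + 1))
          = (g ((m : ℝ) + 1) - g (m : ℝ)) * (ν j * (y j : ℝ))
            + (((m : ℝ) + 1) * g (m : ℝ) - (m : ℝ) * g ((m : ℝ) + 1)) * ν j := by
        intro j _; ring
      rw [Finset.sum_congr rfl this, Finset.sum_add_distrib, ← Finset.mul_sum,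
        ← Finset.mul_sum, ← hx, hν1]
      ring
    rw [heq] at hsum
    exact hsum
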